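/- Fix b, h > 0 and (b', h') ∈ (0, b) × (0, h). Then p^{(λ)}((b,h),(b',h')) converges, as λ → ∞, to p^{(∞)}((b,h),(b',h')) = (4(b − b')b'/h'²)·exp(−(2/3)·b³·(1/h' − 1/h)). In particular, for all sufficiently large λ the point (b', h') belongs to S_{(b,h)}. -/

import Mathlib

open Real Filter

/-- The set `S_{(b,h)}` of admissible new couples `(b', h')`. -/
def Sset (lam b h : ℝ) : Set (ℝ × ℝ) :=
  {p | 0 < p.1 ∧ p.1 < b ∧
    lam ^ (-(2 : ℝ) / 3) * Real.sqrt (b ^ 2 - p.1 ^ 2) < p.2 ∧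
    p.2 < Real.sqrt (h ^ 2 + lam ^ (-(4 : ℝ) / 3) * (b ^ 2 - p.1 ^ 2))}

/-- The area `A_λ = |Δ_n^{(λ)}|₂` of the difference of two circular caps. -/
noncomputable def Alam (lam b h b' h' : ℝ) : ℝ :=
  (lam ^ 2 * h' ^ 2 + lam ^ ((2 : ℝ) / 3) * b' ^ 2) *
      (Real.arctan (lam ^ ((1 : ℝ) / 3) * b /
          Real.sqrt (lam ^ 2 * h' ^ 2 - lam ^ ((2 : ℝ) / 3) * (b ^ 2 - b' ^ 2))) -
        lam ^ ((1 : ℝ) / 3) * b *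
          Real.sqrt (lam ^ 2 * h' ^ 2 - lam ^ ((2 : ℝ) / 3) * (b ^ 2 - b' ^ 2)) /
          (lam ^ 2 * h' ^ 2 + lam ^ ((2 : ℝ) / 3) * b' ^ 2)) -
    (lam ^ 2 * h ^ 2 + lam ^ ((2 : ℝ) / 3) * b ^ 2) *
      (Real.arctan (lam ^ (-(2 : ℝ) / 3) * b / h) -
        lam ^ (-(2 : ℝ) / 3) * (b / h) * (1 + lam ^ (-(4 : ℝ) / 3) * b ^ 2 / h ^ 2)⁻¹)

/-- The transition density `p^{(λ)}((b,h),(b',h'))`. -/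
noncomputable def plam (lam b h b' h' : ℝ) : ℝ :=
  4 * b' / (h' ^ 2 + lam ^ (-(4 : ℝ) / 3) * b' ^ 2) *
    (b * (1 - lam ^ (-(4 : ℝ) / 3) * (b ^ 2 - b' ^ 2) / h' ^ 2) ^ (-(1 : ℝ) / 2) - b') *
    Real.exp (-Alam lam b h b' h') *
    Set.indicator (Sset lam b h) (fun _ => 1) (b', h')

noncomputable def gfun (x : ℝ) : ℝ := ((1 + x ^ 2) * Real.arctan x - x) / x ^ 3

lemma arctan_div_self_tendsto :
    Tendsto (fun x : ℝ => Real.arctan x / x) (nhdsWithin 0 {0}ᶜ) (nhds 1) := by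
  have h := Real.hasDerivAt_arctan 0
  rw [hasDerivAt_iff_tendsto_slope] at h
  have heq : slope Real.arctan 0 =ᶠ[nhdsWithin 0 {0}ᶜ] fun x => Real.arctan x / x := by
    filter_upwards [self_mem_nhdsWithin] with x hx
    simp [slope_fun_def, Real.arctan_zero, div_eq_inv_mul]
  have h2 := Filter.Tendsto.congr' heq h
  simpa using h2

lemma gfun_tendsto : Tendsto gfun (nhdsWithin 0 (Set.Ioi 0)) (nhds (2/3 : ℝ)) := by
  have hmain : Tendsto (fun x : ℝ => ((1 + x ^ 2) * Real.arctan x - x) / x ^ 3)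
      (nhdsWithin 0 (Set.Ioi 0)) (nhds (2/3 : ℝ)) := by
    apply HasDerivAt.lhopital_zero_right_on_Ioo (f' := fun x => 2 * x * Real.arctan x)
      (g' := fun x => 3 * x ^ 2) (one_pos : (0:ℝ) < 1)
    · intro x hx
      have h1 : HasDerivAt (fun x : ℝ => (1 + x ^ 2) * Real.arctan x)
          (2 * x * Real.arctan x + (1 + x ^ 2) * (1 / (1 + x ^ 2))) x := by
        exact (((hasDerivAt_pow 2 x).const_add 1).mul (Real.hasDerivAt_arctan x)).congr_deriv
          (by ring)
      have h2 := h1.sub (hasDerivAt_id x)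
      convert h2 using 1
      · rfl
      · rfl
      · rfl
      have : (1 : ℝ) + x ^ 2 ≠ 0 := by positivity
      rw [mul_one_div_cancel this]; ring
    · intro x hx
      simpa using hasDerivAt_pow 3 x
    · intro x hx
      have : 0 < x := hx.1
      positivity
    · have : ContinuousAt (fun x : ℝ => (1 + x ^ 2) * Real.arctan x - x) 0 := by
        exact (((continuous_const.add (continuous_pow 2)).mul Real.continuous_arctan).sub continuous_id).continuousAt
      have h0 := this.tendsto
      simp only [Real.arctan_zero] at h0
      norm_num at h0
      exact tendsto_nhdsWithin_of_tendsto_nhds h0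
    · have : Tendsto (fun x : ℝ => x ^ 3) (nhds (0:ℝ)) (nhds ((0:ℝ) ^ 3)) :=
        (continuous_pow 3).tendsto 0
      norm_num at this
      exact tendsto_nhdsWithin_of_tendsto_nhds this
    · have h := arctan_div_self_tendsto.mono_left
        (nhdsWithin_mono 0 (fun x hx => ne_of_gt hx : Set.Ioi (0:ℝ) ⊆ {0}ᶜ))
      have h2 : Tendsto (fun x : ℝ => 2 / 3 * (Real.arctan x / x)) (nhdsWithin 0 (Set.Ioi 0))
          (nhds (2/3 * 1 : ℝ)) := h.const_mul _
      norm_num at h2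
      refine h2.congr' ?_
      filter_upwards [self_mem_nhdsWithin] with x hx
      have hx0 : x ≠ 0 := ne_of_gt hx
      field_simp
  exact hmain

lemma Alam_eq (lam b h b' h' : ℝ) (hlam : 0 < lam) (hb : 0 < b) (hh : 0 < h)
    (hb' : 0 < b') (hbb : b' < b) (hh' : 0 < h')
    (hsmall : lam ^ (-(4 : ℝ) / 3) * (b ^ 2 - b' ^ 2) < h' ^ 2) :
    Alam lam b h b' h' =
      b ^ 3 / Real.sqrt (h' ^ 2 - lam ^ (-(4 : ℝ) / 3) * (b ^ 2 - b' ^ 2)) *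
        gfun (lam ^ (-(2 : ℝ) / 3) * b /
          Real.sqrt (h' ^ 2 - lam ^ (-(4 : ℝ) / 3) * (b ^ 2 - b' ^ 2))) -
      b ^ 3 / h * gfun (lam ^ (-(2 : ℝ) / 3) * b / h) := by
  set E : ℝ := lam ^ ((1 : ℝ) / 3) with hE
  have hE0 : 0 < E := Real.rpow_pos_of_pos hlam _
  have hpow : ∀ n : ℕ, lam ^ ((n : ℝ) / 3) = E ^ n := by
    intro n
    rw [hE, ← Real.rpow_natCast (lam ^ ((1:ℝ)/3)) n, ← Real.rpow_mul hlam.le]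
    congr 1; push_cast; try ring
  clear_value E
  have h13 : lam ^ ((1 : ℝ) / 3) = E := hE.symm
  have h23 : lam ^ ((2 : ℝ) / 3) = E ^ 2 := by simpa using hpow 2
  have h2 : lam ^ 2 = E ^ 6 := by
    have := hpow 6; norm_num at this
    rw [← this, ← Real.rpow_natCast lam 2]; try norm_num
  have hm23 : lam ^ (-(2 : ℝ) / 3) = (E ^ 2)⁻¹ := by
    rw [← h23, ← Real.rpow_neg hlam.le]; congr 1; ring
  have hm43 : lam ^ (-(4 : ℝ) / 3) = (E ^ 4)⁻¹ := by
    have := hpow 4; norm_num at this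
    rw [← this, ← Real.rpow_neg hlam.le]; congr 1; ring
  rw [hm43] at hsmall ⊢
  set c : ℝ := b ^ 2 - b' ^ 2 with hc
  have hc0 : 0 < c := by nlinarith
  set s : ℝ := Real.sqrt (h' ^ 2 - (E ^ 4)⁻¹ * c) with hsdef
  have hs0 : 0 < s := Real.sqrt_pos.2 (by linarith)
  have hs2 : s ^ 2 = h' ^ 2 - (E ^ 4)⁻¹ * c := Real.sq_sqrt (by linarith)
  have hbigsqrt : Real.sqrt (lam ^ 2 * h' ^ 2 - lam ^ ((2 : ℝ) / 3) * c) = E ^ 3 * s := by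
    rw [h2, h23]
    have heq : E ^ 6 * h' ^ 2 - E ^ 2 * c = (E ^ 3) ^ 2 * (h' ^ 2 - (E ^ 4)⁻¹ * c) := by
      field_simp
    rw [heq, Real.sqrt_mul (by positivity), Real.sqrt_sq (by positivity)]
  unfold Alam gfun
  rw [hbigsqrt, h2, h23, h13, hm23, hm43]
  have harg : E * b / (E ^ 3 * s) = (E ^ 2)⁻¹ * b / s := by
    field_simp
  rw [harg]
  have hh'2 : h' ^ 2 = s ^ 2 + (E ^ 4)⁻¹ * c := by rw [hs2]; ring
  rw [hh'2]
  generalize Real.arctan ((E ^ 2)⁻¹ * b / s) = A1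
  generalize Real.arctan ((E ^ 2)⁻¹ * b / h) = A2
  have hb2 : b' ^ 2 = b ^ 2 - c := by rw [hc]; ring
  rw [hb2]
  have hd : E ^ 6 * (s ^ 2 + (E ^ 4)⁻¹ * c) + E ^ 2 * (b ^ 2 - c) = E ^ 2 * (E ^ 4 * s ^ 2 + b ^ 2) := by
    field_simp; ring
  rw [hd]
  have hfrac : E * b * (E ^ 3 * s) / (E ^ 2 * (E ^ 4 * s ^ 2 + b ^ 2)) = E ^ 2 * b * s / (E ^ 4 * s ^ 2 + b ^ 2) := by
    rw [div_eq_div_iff (by positivity) (by positivity)]; ring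
  rw [hfrac]
  have hinv : (1 + (E ^ 4)⁻¹ * b ^ 2 / h ^ 2)⁻¹ = E ^ 4 * h ^ 2 / (E ^ 4 * h ^ 2 + b ^ 2) := by
    rw [eq_div_iff (by positivity)]
    field_simp
    try ring
  rw [hinv]
  field_simp


/-- `p^{(λ)}((b,h),(b',h')) → p^{(∞)}((b,h),(b',h')) = (4(b−b')b'/h'²) exp(−(2/3)b³(1/h'−1/h))`
as `λ → ∞`; moreover for all sufficiently large `λ`, `(b', h') ∈ S_{(b,h)}`. -/
theorem plam_tendsto (b h b' h' : ℝ) (hb : 0 < b) (hh : 0 < h)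
    (hb' : 0 < b') (hb'b : b' < b) (hh' : 0 < h') (hh'h : h' < h) :
    Tendsto (fun lam : ℝ => plam lam b h b' h') atTop
        (nhds (4 * (b - b') * b' / h' ^ 2 * Real.exp (-(2 / 3 * b ^ 3 * (1 / h' - 1 / h))))) ∧
      ∀ᶠ lam : ℝ in atTop, (b', h') ∈ Sset lam b h := by
  have hc0 : 0 < b ^ 2 - b' ^ 2 := by nlinarith
  have h43 : Tendsto (fun lam : ℝ => lam ^ (-(4 : ℝ) / 3)) atTop (nhds 0) := by
    have := tendsto_rpow_neg_atTop (show (0:ℝ) < 4/3 by norm_num)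
    simpa [neg_div] using this
  have h23t : Tendsto (fun lam : ℝ => lam ^ (-(2 : ℝ) / 3)) atTop (nhds 0) := by
    have := tendsto_rpow_neg_atTop (show (0:ℝ) < 2/3 by norm_num)
    simpa [neg_div] using this
  -- eventual membership in Sset
  have hSmem : ∀ᶠ lam : ℝ in atTop, (b', h') ∈ Sset lam b h := by
    have hev1 : ∀ᶠ lam : ℝ in atTop,
        lam ^ (-(2 : ℝ) / 3) * Real.sqrt (b ^ 2 - b' ^ 2) < h' := by
      have := (h23t.mul_const (Real.sqrt (b ^ 2 - b' ^ 2)))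
      rw [zero_mul] at this
      exact this.eventually (eventually_lt_nhds hh')
    filter_upwards [hev1, eventually_gt_atTop (0:ℝ)] with lam hev hl0
    refine ⟨hb', hb'b, hev, ?_⟩
    rw [show h' = Real.sqrt (h' ^ 2) from (Real.sqrt_sq hh'.le).symm]
    apply Real.sqrt_lt_sqrt (by positivity)
    have hp : 0 < lam ^ (-(4 : ℝ) / 3) := Real.rpow_pos_of_pos hl0 _
    nlinarith
  refine ⟨?_, hSmem⟩
  -- convergence of Alam
  set u : ℝ → ℝ := fun lam => lam ^ (-(2 : ℝ) / 3) * b /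
      Real.sqrt (h' ^ 2 - lam ^ (-(4 : ℝ) / 3) * (b ^ 2 - b' ^ 2)) with hu
  set u2 : ℝ → ℝ := fun lam => lam ^ (-(2 : ℝ) / 3) * b / h with hu2
  have hsT : Tendsto (fun lam : ℝ =>
      Real.sqrt (h' ^ 2 - lam ^ (-(4 : ℝ) / 3) * (b ^ 2 - b' ^ 2))) atTop (nhds h') := by
    have hin : Tendsto (fun lam : ℝ => h' ^ 2 - lam ^ (-(4 : ℝ) / 3) * (b ^ 2 - b' ^ 2))
        atTop (nhds (h' ^ 2)) := by
      have := (h43.mul_const (b ^ 2 - b' ^ 2)).const_sub (h' ^ 2)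
      simpa using this
    have := (Real.continuous_sqrt.tendsto (h' ^ 2)).comp hin
    simpa [Real.sqrt_sq hh'.le, Function.comp_def] using this
  have hsev : ∀ᶠ lam : ℝ in atTop,
      0 < Real.sqrt (h' ^ 2 - lam ^ (-(4 : ℝ) / 3) * (b ^ 2 - b' ^ 2)) :=
    hsT.eventually (eventually_gt_nhds hh')
  have hsmallev : ∀ᶠ lam : ℝ in atTop,
      lam ^ (-(4 : ℝ) / 3) * (b ^ 2 - b' ^ 2) < h' ^ 2 := by
    have := h43.mul_const (b ^ 2 - b' ^ 2)
    rw [zero_mul] at this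
    exact this.eventually (eventually_lt_nhds (by positivity))
  have huT : Tendsto u atTop (nhdsWithin 0 (Set.Ioi 0)) := by
    rw [tendsto_nhdsWithin_iff]
    constructor
    · have := ((h23t.mul_const b).div hsT hh'.ne')
      rw [zero_mul, zero_div] at this; exact this
    · filter_upwards [hsev, eventually_gt_atTop (0:ℝ)] with lam hs hl0
      have hp : 0 < lam ^ (-(2 : ℝ) / 3) := Real.rpow_pos_of_pos hl0 _
      exact div_pos (mul_pos hp hb) hs
  have hu2T : Tendsto u2 atTop (nhdsWithin 0 (Set.Ioi 0)) := by
    rw [tendsto_nhdsWithin_iff]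
    constructor
    · have := ((h23t.mul_const b).div_const h)
      simpa using this
    · filter_upwards [eventually_gt_atTop (0:ℝ)] with lam hl0
      have hp : 0 < lam ^ (-(2 : ℝ) / 3) := Real.rpow_pos_of_pos hl0 _
      exact div_pos (mul_pos hp hb) hh
  have hg1 : Tendsto (fun lam => gfun (u lam)) atTop (nhds (2/3)) := gfun_tendsto.comp huT
  have hg2 : Tendsto (fun lam => gfun (u2 lam)) atTop (nhds (2/3)) := gfun_tendsto.comp hu2T
  have hA : Tendsto (fun lam : ℝ => Alam lam b h b' h') atTop
      (nhds (2 / 3 * b ^ 3 * (1 / h' - 1 / h))) := by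
    have hF : Tendsto (fun lam : ℝ =>
        b ^ 3 / Real.sqrt (h' ^ 2 - lam ^ (-(4 : ℝ) / 3) * (b ^ 2 - b' ^ 2)) * gfun (u lam)
          - b ^ 3 / h * gfun (u2 lam)) atTop
        (nhds (b ^ 3 / h' * (2/3) - b ^ 3 / h * (2/3))) :=
      ((tendsto_const_nhds.div hsT hh'.ne').mul hg1).sub (hg2.const_mul _)
    have heq : (2 : ℝ) / 3 * b ^ 3 * (1 / h' - 1 / h)
        = b ^ 3 / h' * (2/3) - b ^ 3 / h * (2/3) := by ring
    rw [heq]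
    refine hF.congr' ?_
    filter_upwards [hsmallev, eventually_gt_atTop (0:ℝ)] with lam hsm hl0
    exact (Alam_eq lam b h b' h' hl0 hb hh hb' hb'b hh' hsm).symm
  -- the three factors
  have T1 : Tendsto (fun lam : ℝ => 4 * b' / (h' ^ 2 + lam ^ (-(4 : ℝ) / 3) * b' ^ 2)) atTop
      (nhds (4 * b' / h' ^ 2)) := by
    have hden : Tendsto (fun lam : ℝ => h' ^ 2 + lam ^ (-(4 : ℝ) / 3) * b' ^ 2) atTop
        (nhds (h' ^ 2)) := by
      have := (h43.mul_const (b' ^ 2)).const_add (h' ^ 2)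
      simpa using this
    exact tendsto_const_nhds.div hden (by positivity)
  have T2 : Tendsto (fun lam : ℝ =>
      b * (1 - lam ^ (-(4 : ℝ) / 3) * (b ^ 2 - b' ^ 2) / h' ^ 2) ^ (-(1 : ℝ) / 2) - b') atTop
      (nhds (b - b')) := by
    have hin : Tendsto (fun lam : ℝ => 1 - lam ^ (-(4 : ℝ) / 3) * (b ^ 2 - b' ^ 2) / h' ^ 2)
        atTop (nhds 1) := by
      have := ((h43.mul_const (b ^ 2 - b' ^ 2)).div_const (h' ^ 2)).const_sub (1:ℝ)
      simpa using this
    have hcont : ContinuousAt (fun x : ℝ => x ^ (-(1 : ℝ) / 2)) 1 :=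
      Real.continuousAt_rpow_const 1 _ (Or.inl one_ne_zero)
    have hrp := hcont.tendsto.comp hin
    rw [Real.one_rpow] at hrp
    have := (hrp.const_mul b).sub (tendsto_const_nhds (x := b'))
    simpa using this
  have T3 : Tendsto (fun lam : ℝ => Real.exp (-Alam lam b h b' h')) atTop
      (nhds (Real.exp (-(2 / 3 * b ^ 3 * (1 / h' - 1 / h))))) :=
    (Real.continuous_exp.tendsto _).comp hA.neg
  have hprod := (T1.mul T2).mul T3
  have hval : 4 * (b - b') * b' / h' ^ 2 * Real.exp (-(2 / 3 * b ^ 3 * (1 / h' - 1 / h)))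
      = 4 * b' / h' ^ 2 * (b - b') * Real.exp (-(2 / 3 * b ^ 3 * (1 / h' - 1 / h))) := by
    ring
  rw [hval]
  refine hprod.congr' ?_
  filter_upwards [hSmem] with lam hmem
  simp [plam, Set.indicator_of_mem hmem]
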